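/- Least action principle: let s : ℤ^d_n → ℝ, and let F_s = { f : ℤ^d_n → ℝ : f ≥ 0 and s − (−Δ)^{α/2}_n f ≤ 1 pointwise }. If u ≥ 0 satisfies s − (−Δ)^{α/2}_n u = 1 and min u = 0, then u(x) = inf { f(x) : f ∈ F_s } for every x ∈ ℤ^d_n. -/

import Mathlib

open Real

noncomputable def znorm (d : ℕ) (z : Fin d → ℤ) : ℝ :=
  Real.sqrt (∑ i, ((z i : ℝ)) ^ 2)

/-- `c^{(α)} = (∑_{z ∈ ℤ^d \ {0}} ‖z‖^{-(d+α)})⁻¹`. -/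
noncomputable def cAlpha (d : ℕ) (α : ℝ) : ℝ :=
  (∑' z : {z : Fin d → ℤ // z ≠ 0}, znorm d z.1 ^ (-((d : ℝ) + α)))⁻¹

/-- Long-range transition probabilities on the discrete torus. -/
noncomputable def pn (d n : ℕ) (α : ℝ) (x : Fin d → ZMod n) : ℝ :=
  cAlpha d α *
    ∑' z : {z : Fin d → ℤ // z ≠ 0 ∧ ∀ i, ((z i : ZMod n)) = x i},
      znorm d z.1 ^ (-((d : ℝ) + α))

/-- Discrete fractional Laplacian `(−Δ)^{α/2}_n u (x) = u x − ∑_y p_n^{(α)}(x−y) u y`. -/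
noncomputable def fracLap (d n : ℕ) [NeZero n] (α : ℝ)
    (u : (Fin d → ZMod n) → ℝ) (x : Fin d → ZMod n) : ℝ :=
  u x - ∑ y : Fin d → ZMod n, pn d n α (x - y) * u y

/-! ### Auxiliary lemmas: summability of the lattice series -/

noncomputable def gfun (b : ℝ) (k : ℤ) : ℝ := (max |(k:ℝ)| 1) ^ (-b)

lemma gfun_nonneg (b : ℝ) (k : ℤ) : 0 ≤ gfun b k :=
  Real.rpow_nonneg (le_trans zero_le_one (le_max_right _ _)) _

lemma summable_gfun {b : ℝ} (hb : 1 < b) : Summable (gfun b) := by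
  have h1 : Summable (fun k : ℤ => |(k:ℝ)| ^ (-b)) := Real.summable_abs_int_rpow hb
  have h2 : Summable (fun k : ℤ => if k = 0 then (1:ℝ) else 0) :=
    summable_of_ne_finset_zero (s := {0}) (by intro k hk; simp at hk; simp [hk])
  refine (h1.add h2).of_nonneg_of_le (fun k => gfun_nonneg b k) ?_
  intro k
  rcases eq_or_ne k 0 with h | h
  · simp [gfun, h, Real.zero_rpow (by linarith : -b ≠ 0)]
  · have : |(k:ℝ)| ≥ 1 := by
      have : (1:ℤ) ≤ |k| := Int.one_le_abs h
      calc (1:ℝ) ≤ (|k| : ℤ) := by exact_mod_cast this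
        _ = |(k:ℝ)| := by push_cast; ring
    simp [gfun, h, max_eq_left this]

lemma summable_Gfun {b : ℝ} (hb : 1 < b) :
    ∀ d : ℕ, Summable (fun z : Fin d → ℤ => ∏ i, gfun b (z i)) := by
  intro d
  induction d with
  | zero => exact summable_of_finite_support (Set.toFinite _)
  | succ d ih =>
    rw [← (Fin.consEquiv fun _ : Fin (d+1) => ℤ).summable_iff]
    have heq : ((fun z : Fin (d+1) → ℤ => ∏ i, gfun b (z i)) ∘ (Fin.consEquiv fun _ : Fin (d+1) => ℤ))
        = fun p : ℤ × (Fin d → ℤ) => gfun b p.1 * ∏ i, gfun b (p.2 i) := by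
      funext p
      simp only [Function.comp_apply, Fin.consEquiv_apply]
      simp [Fin.prod_univ_succ]
    rw [heq]
    have h1 : Summable fun k : ℤ => ‖gfun b k‖ := by
      simpa [Real.norm_eq_abs, abs_of_nonneg (gfun_nonneg b _)] using summable_gfun hb
    have h2 : Summable fun w : Fin d → ℤ => ‖∏ i, gfun b (w i)‖ := by
      have : (fun w : Fin d → ℤ => ‖∏ i, gfun b (w i)‖) = fun w => ∏ i, gfun b (w i) := by
        funext w
        exact abs_of_nonneg (Finset.prod_nonneg fun i _ => gfun_nonneg b _)
      rw [this]; exact ih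
    exact summable_mul_of_summable_norm (ι := ℤ) (ι' := Fin d → ℤ) (R := ℝ)
      (f := gfun b) (g := fun w : Fin d → ℤ => ∏ i, gfun b (w i)) h1 h2

lemma znorm_nonneg (d : ℕ) (z : Fin d → ℤ) : 0 ≤ znorm d z := Real.sqrt_nonneg _

lemma abs_le_znorm (d : ℕ) (z : Fin d → ℤ) (j : Fin d) : |(z j : ℝ)| ≤ znorm d z := by
  rw [← Real.sqrt_sq_eq_abs]
  apply Real.sqrt_le_sqrt
  exact Finset.single_le_sum (f := fun i => ((z i : ℝ))^2)
    (fun i _ => sq_nonneg _) (Finset.mem_univ j)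

lemma one_le_znorm (d : ℕ) (z : Fin d → ℤ) (hz : z ≠ 0) : 1 ≤ znorm d z := by
  obtain ⟨j, hj⟩ := Function.ne_iff.mp hz
  have hj' : z j ≠ 0 := by simpa using hj
  have h1 : (1:ℝ) ≤ |(z j : ℝ)| := by
    have : (1:ℤ) ≤ |z j| := Int.one_le_abs hj'
    calc (1:ℝ) ≤ (|z j| : ℤ) := by exact_mod_cast this
      _ = |(z j : ℝ)| := by push_cast; ring
  exact h1.trans (abs_le_znorm d z j)

lemma znorm_bound (d : ℕ) (hd : 1 ≤ d) (α : ℝ) (hα : 0 < α) (z : Fin d → ℤ) (hz : z ≠ 0) :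
    znorm d z ^ (-((d:ℝ) + α)) ≤ ∏ i, gfun (1 + α / d) (z i) := by
  set b := 1 + α / d with hb
  set M := znorm d z with hM
  have hM1 : 1 ≤ M := one_le_znorm d z hz
  have hM0 : 0 < M := lt_of_lt_of_le one_pos hM1
  have hbpos : 0 < b := by
    rw [hb]
    have : 0 < α / d := div_pos hα (by exact_mod_cast hd)
    linarith
  have hfac : ∀ i, M ^ (-b) ≤ gfun b (z i) := by
    intro i
    have hle : max |(z i : ℝ)| 1 ≤ M := max_le (abs_le_znorm d z i) hM1
    have hpos : (0:ℝ) < max |(z i : ℝ)| 1 := lt_of_lt_of_le one_pos (le_max_right _ _)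
    unfold gfun
    rw [Real.rpow_neg hM0.le, Real.rpow_neg hpos.le]
    exact inv_anti₀ (Real.rpow_pos_of_pos hpos b) (Real.rpow_le_rpow hpos.le hle hbpos.le)
  calc M ^ (-((d:ℝ) + α)) = ∏ _i : Fin d, M ^ (-b) := by
        rw [Finset.prod_const, ← Real.rpow_natCast (M ^ (-b)) _, ← Real.rpow_mul hM0.le]
        congr 1
        have hd0 : (d:ℝ) ≠ 0 := by positivity
        rw [Finset.card_univ, Fintype.card_fin, hb, neg_mul, add_mul, one_mul, div_mul_cancel₀ _ hd0]
    _ ≤ ∏ i, gfun b (z i) :=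
        Finset.prod_le_prod (fun i _ => Real.rpow_nonneg hM0.le _) (fun i _ => hfac i)

lemma summable_on (d : ℕ) (hd : 1 ≤ d) (α : ℝ) (hα : 0 < α) (s : Set (Fin d → ℤ))
    (hs : ∀ z ∈ s, z ≠ 0) : Summable (fun z : s => znorm d z.1 ^ (-((d:ℝ) + α))) := by
  have hb : 1 < 1 + α / d := by
    have : 0 < α / d := div_pos hα (by exact_mod_cast hd)
    linarith
  have hsum : Summable (fun z : s => ∏ i, gfun (1 + α / d) (z.1 i)) :=
    (summable_Gfun hb d).subtype _
  exact hsum.of_nonneg_of_le (fun z => Real.rpow_nonneg (znorm_nonneg d z.1) _)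
    (fun z => znorm_bound d hd α hα z.1 (hs z.1 z.2))

/-! ### Properties of `pn` -/

lemma one_ne_zero_fn (d : ℕ) (hd : 1 ≤ d) : (fun _ : Fin d => (1:ℤ)) ≠ 0 := by
  intro h
  have := congrFun h ⟨0, hd⟩
  simp at this

lemma znorm_term_pos (d : ℕ) (α : ℝ) (z : Fin d → ℤ) (hz : z ≠ 0) :
    0 < znorm d z ^ (-((d:ℝ) + α)) := by
  apply Real.rpow_pos_of_pos
  obtain ⟨j, hj⟩ := Function.ne_iff.mp hz
  apply Real.sqrt_pos.mpr
  have hj' : z j ≠ 0 := by simpa using hj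
  have h1 : (0:ℝ) < (z j : ℝ)^2 := by
    have : (z j : ℝ) ≠ 0 := by exact_mod_cast hj'
    positivity
  exact lt_of_lt_of_le h1 (Finset.single_le_sum (f := fun i => ((z i : ℝ))^2)
    (fun i _ => sq_nonneg _) (Finset.mem_univ j))

lemma tsum_znorm_pos (d : ℕ) (hd : 1 ≤ d) (α : ℝ) (hα : 0 < α) :
    0 < ∑' z : {z : Fin d → ℤ // z ≠ 0}, znorm d z.1 ^ (-((d : ℝ) + α)) := by
  have hsum := summable_on d hd α hα {z | z ≠ 0} (fun z hz => hz)
  exact Summable.tsum_pos hsum (fun z => Real.rpow_nonneg (Real.sqrt_nonneg _) _)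
    ⟨(fun _ => 1), one_ne_zero_fn d hd⟩
    (znorm_term_pos d α _ (one_ne_zero_fn d hd))

lemma cAlpha_pos (d : ℕ) (hd : 1 ≤ d) (α : ℝ) (hα : 0 < α) : 0 < cAlpha d α :=
  inv_pos.mpr (tsum_znorm_pos d hd α hα)

lemma fiber_nonempty (d n : ℕ) [NeZero n] (hd : 1 ≤ d) (x : Fin d → ZMod n) :
    ∃ z : Fin d → ℤ, z ≠ 0 ∧ ∀ i, ((z i : ZMod n)) = x i := by
  by_cases hx : x = 0
  · refine ⟨fun _ => (n : ℤ), ?_, ?_⟩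
    · intro h
      have := congrFun h ⟨0, hd⟩
      simp at this
      exact (NeZero.ne n) this
    · intro i
      simp [hx]
  · obtain ⟨j, hj⟩ := Function.ne_iff.mp hx
    have hj' : x j ≠ 0 := by simpa using hj
    refine ⟨fun i => ((x i).val : ℤ), ?_, ?_⟩
    · intro h
      have h2 := congrFun h j
      simp only [Pi.zero_apply, Int.natCast_eq_zero] at h2
      exact hj' (by rwa [← ZMod.val_eq_zero])
    · intro i
      push_cast
      simp [ZMod.natCast_val, ZMod.cast_id]

lemma pn_pos (d n : ℕ) [NeZero n] (hd : 1 ≤ d) (α : ℝ) (hα : 0 < α) (x : Fin d → ZMod n) :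
    0 < pn d n α x := by
  apply mul_pos (cAlpha_pos d hd α hα)
  obtain ⟨z, hz1, hz2⟩ := fiber_nonempty d n hd x
  have hsum := summable_on d hd α hα {z | z ≠ 0 ∧ ∀ i, ((z i : ZMod n)) = x i} (fun z hz => hz.1)
  exact Summable.tsum_pos hsum (fun z => Real.rpow_nonneg (Real.sqrt_nonneg _) _) ⟨z, hz1, hz2⟩
    (znorm_term_pos d α z hz1)

lemma sum_pn_eq_one (d n : ℕ) [NeZero n] (hd : 1 ≤ d) (α : ℝ) (hα : 0 < α) :
    ∑ x : Fin d → ZMod n, pn d n α x = 1 := by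
  classical
  set h : (Fin d → ℤ) → ℝ := fun z => znorm d z ^ (-((d:ℝ) + α)) with hh
  set S := {z : Fin d → ℤ // z ≠ 0} with hS
  have hsum : Summable (fun z : S => h z.1) := summable_on d hd α hα {z | z ≠ 0} (fun z hz => hz)
  let pr : S → (Fin d → ZMod n) := fun z => fun i => ((z.1 i : ZMod n))
  let e1 : (Σ x : Fin d → ZMod n, {w : S // pr w = x}) ≃ S := Equiv.sigmaFiberEquiv pr
  have hsig : Summable (fun p : Σ x : Fin d → ZMod n, {w : S // pr w = x} => h (e1 p).1) :=
    e1.summable_iff.mpr hsum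
  have key : ∑' z : S, h z.1 = ∑ x : Fin d → ZMod n, ∑' w : {w : S // pr w = x}, h w.1.1 := by
    rw [← e1.tsum_eq (fun z : S => h z.1)]
    rw [Summable.tsum_sigma hsig]
    rw [tsum_fintype]
    rfl
  have fib : ∀ x : Fin d → ZMod n, (∑' w : {w : S // pr w = x}, h w.1.1)
      = ∑' z : {z : Fin d → ℤ // z ≠ 0 ∧ ∀ i, ((z i : ZMod n)) = x i}, h z.1 := by
    intro x
    let e2 : {w : S // pr w = x} ≃ {z : Fin d → ℤ // z ≠ 0 ∧ ∀ i, ((z i : ZMod n)) = x i} :=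
      { toFun := fun c => ⟨c.1.1, c.1.2, fun i => congrFun c.2 i⟩
        invFun := fun z => ⟨⟨z.1, z.2.1⟩, funext z.2.2⟩
        left_inv := fun c => rfl
        right_inv := fun z => rfl }
    rw [← e2.tsum_eq (fun z : {z : Fin d → ℤ // z ≠ 0 ∧ ∀ i, ((z i : ZMod n)) = x i} => h z.1)]
    rfl
  have hT : (∑' z : S, h z.1) ≠ 0 := ne_of_gt (tsum_znorm_pos d hd α hα)
  have hstep : ∑ x : Fin d → ZMod n, pn d n α x
      = cAlpha d α * ∑ x : Fin d → ZMod n,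
        ∑' z : {z : Fin d → ℤ // z ≠ 0 ∧ ∀ i, ((z i : ZMod n)) = x i}, h z.1 := by
    rw [Finset.mul_sum]
    rfl
  rw [hstep, ← Finset.sum_congr rfl (fun x _ => fib x), ← key]
  unfold cAlpha
  rw [hh]
  exact inv_mul_cancel₀ hT

/-! ### The maximum-principle comparison lemma -/

lemma sum_pn_shift (d n : ℕ) [NeZero n] (α : ℝ) (x : Fin d → ZMod n) :
    ∑ y : Fin d → ZMod n, pn d n α (x - y) = ∑ y : Fin d → ZMod n, pn d n α y :=
  Fintype.sum_equiv (Equiv.subLeft x) _ _ (fun y => rfl)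

lemma comparison (d n : ℕ) (hd : 1 ≤ d) [NeZero n] (α : ℝ) (hα : 0 < α)
    (u f : (Fin d → ZMod n) → ℝ)
    (hu0 : ∀ x, 0 ≤ u x) (humin : ∃ x, u x = 0)
    (hineq : ∀ y, fracLap d n α u y ≤ fracLap d n α f y)
    (hf0 : ∀ y, 0 ≤ f y) : ∀ y, u y ≤ f y := by
  classical
  set g : (Fin d → ZMod n) → ℝ := fun y => f y - u y with hg
  have hLg : ∀ y, ∑ z : Fin d → ZMod n, pn d n α (y - z) * g z ≤ g y := by
    intro y
    have h1 := hineq y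
    unfold fracLap at h1
    have expand : ∑ z : Fin d → ZMod n, pn d n α (y - z) * g z
        = (∑ z : Fin d → ZMod n, pn d n α (y - z) * f z)
          - ∑ z : Fin d → ZMod n, pn d n α (y - z) * u z := by
      rw [← Finset.sum_sub_distrib]
      exact Finset.sum_congr rfl (fun z _ => by rw [hg]; ring)
    rw [expand]
    have hgy : g y = f y - u y := rfl
    linarith
  have hne : Nonempty (Fin d → ZMod n) := inferInstance
  obtain ⟨y0, -, hy0⟩ := Finset.exists_min_image Finset.univ g
    ⟨Classical.arbitrary _, Finset.mem_univ _⟩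
  set m := g y0 with hm
  have hmle : ∀ z, m ≤ g z := fun z => hy0 z (Finset.mem_univ z)
  have hshift : ∑ z : Fin d → ZMod n, pn d n α (y0 - z) = 1 := by
    rw [sum_pn_shift]; exact sum_pn_eq_one d n hd α hα
  have hsum0 : ∑ z : Fin d → ZMod n, pn d n α (y0 - z) * (g z - m) = 0 := by
    apply le_antisymm
    · have : ∑ z : Fin d → ZMod n, pn d n α (y0 - z) * (g z - m)
          = (∑ z : Fin d → ZMod n, pn d n α (y0 - z) * g z)
            - (∑ z : Fin d → ZMod n, pn d n α (y0 - z)) * m := by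
        rw [Finset.sum_mul, ← Finset.sum_sub_distrib]
        exact Finset.sum_congr rfl (fun z _ => by ring)
      rw [this, hshift]
      have := hLg y0
      simp only [one_mul]
      linarith
    · apply Finset.sum_nonneg
      intro z _
      exact mul_nonneg (pn_pos d n hd α hα _).le (by linarith [hmle z])
  have hall : ∀ z, g z = m := by
    intro z
    have := (Finset.sum_eq_zero_iff_of_nonneg
      (fun z _ => mul_nonneg (pn_pos d n hd α hα _).le (by linarith [hmle z]))).mp hsum0
      z (Finset.mem_univ z)
    have hpn := (pn_pos d n hd α hα (y0 - z)).ne'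
    have : g z - m = 0 := by
      rcases mul_eq_zero.mp this with h | h
      · exact absurd h hpn
      · exact h
    linarith
  obtain ⟨x0, hx0⟩ := humin
  have hm0 : 0 ≤ m := by
    have h3 := hall x0
    have h4 : g x0 = f x0 - u x0 := rfl
    rw [h4, hx0] at h3
    linarith [hf0 x0]
  intro y
  have h5 := hmle y
  have h6 : g y = f y - u y := rfl
  rw [h6] at h5
  linarith

/-- Least action principle. -/
theorem stmt10 (d n : ℕ) (hd : 1 ≤ d) [NeZero n] (α : ℝ) (hα : 0 < α)
    (s : (Fin d → ZMod n) → ℝ) (u : (Fin d → ZMod n) → ℝ)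
    (hu0 : ∀ x, 0 ≤ u x) (humin : ∃ x, u x = 0)
    (hueq : ∀ x, s x - fracLap d n α u x = 1) :
    ∀ x, u x = sInf {r : ℝ | ∃ f : (Fin d → ZMod n) → ℝ,
      (∀ y, 0 ≤ f y) ∧ (∀ y, s y - fracLap d n α f y ≤ 1) ∧ r = f x} := by
  intro x
  have hmem : u x ∈ {r : ℝ | ∃ f : (Fin d → ZMod n) → ℝ,
      (∀ y, 0 ≤ f y) ∧ (∀ y, s y - fracLap d n α f y ≤ 1) ∧ r = f x} :=
    ⟨u, hu0, fun y => le_of_eq (hueq y), rfl⟩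
  have hlb : ∀ r ∈ {r : ℝ | ∃ f : (Fin d → ZMod n) → ℝ,
      (∀ y, 0 ≤ f y) ∧ (∀ y, s y - fracLap d n α f y ≤ 1) ∧ r = f x}, u x ≤ r := by
    rintro r ⟨f, hf0, hf1, rfl⟩
    refine comparison d n hd α hα u f hu0 humin ?_ hf0 x
    intro y
    have h1 := hf1 y
    have h2 := hueq y
    linarith
  exact le_antisymm (le_csInf ⟨u x, hmem⟩ hlb) (csInf_le ⟨u x, hlb⟩ hmem)
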